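/- For every odd positive integer n and every real t, the integral from -pi to pi of cos(xi/2)^n * e^{t*xi} d xi is at most e^{2*t^2/n} * sqrt(8*pi/n). -/

import Mathlib

open Real MeasureTheory

/-- Taylor-type bound: `cos x ≤ exp (-(x^2/2))` on `[-π/2, π/2]`. -/
lemma cos_le_exp_neg_sq_div_two {x : ℝ} (hx : |x| ≤ Real.pi / 2) :
    Real.cos x ≤ Real.exp (-(x ^ 2 / 2)) := by
  wlog hx0 : 0 ≤ x generalizing x
  · have := this (x := -x) (by rwa [abs_neg]) (by linarith [le_of_not_ge hx0])
    simpa using this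
  have hxle : x ≤ Real.pi / 2 := (abs_le.mp hx).2
  have hpi : Real.pi < 3.15 := by
    have := Real.pi_lt_d2
    linarith
  have hx2 : x < 2 := by linarith
  -- Step 1: cos x ≤ (1 - x^2/4)^2
  have key : Real.cos x ≤ (1 - x ^ 2 / 4) ^ 2 := by
    rcases eq_or_lt_of_le hx0 with h0 | h0
    · rw [← h0]; norm_num
    · set y := x / 2 with hy_def
      have hy : 0 < y := by simp [hy_def]; linarith
      have hy1 : y ≤ 1 := by simp [hy_def]; linarith
      have hsin : y - y ^ 3 / 4 < Real.sin y := by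
        have := Real.sin_gt_sub_cube hy; nlinarith [pow_pos hy 3]
      have hnn : 0 ≤ y - y ^ 3 / 4 := by nlinarith [mul_nonneg hy.le hy.le]
      have hcos : Real.cos x = 1 - 2 * Real.sin y ^ 2 := by
        have h1 : Real.cos (2 * y) = 2 * Real.cos y ^ 2 - 1 := Real.cos_two_mul y
        have h2 : Real.sin y ^ 2 + Real.cos y ^ 2 = 1 := Real.sin_sq_add_cos_sq _
        have h3 : (2 : ℝ) * y = x := by rw [hy_def]; ring
        rw [h3] at h1
        linarith
      rw [hcos]
      have hx4 : x = 2 * y := by rw [hy_def]; ring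
      rw [hx4]
      have hs2 : (y - y ^ 3 / 4) ^ 2 ≤ Real.sin y ^ 2 :=
        pow_le_pow_left₀ hnn hsin.le 2
      nlinarith [hs2, pow_nonneg hy.le 6]
  -- Step 2: (1 - x^2/4)^2 ≤ exp(-(x^2/2))
  have h1 : (1 : ℝ) - x ^ 2 / 4 ≤ Real.exp (-(x ^ 2 / 4)) := by
    have := Real.add_one_le_exp (-(x ^ 2 / 4))
    linarith
  have h2 : (0 : ℝ) ≤ 1 - x ^ 2 / 4 := by nlinarith
  calc Real.cos x ≤ (1 - x ^ 2 / 4) ^ 2 := key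
    _ ≤ Real.exp (-(x ^ 2 / 4)) ^ 2 := by exact pow_le_pow_left₀ h2 h1 2
    _ = Real.exp (-(x ^ 2 / 2)) := by
        rw [← Real.exp_nat_mul]; ring_nf

/-- Gaussian integral with linear term. -/
lemma integral_exp_neg_sq_add_linear {a : ℝ} (ha : 0 < a) (t : ℝ) :
    ∫ x : ℝ, Real.exp (-a * x ^ 2 + t * x) =
      Real.exp (t ^ 2 / (4 * a)) * Real.sqrt (Real.pi / a) := by
  have h : ∀ x : ℝ, Real.exp (-a * x ^ 2 + t * x) =
      Real.exp (t ^ 2 / (4 * a)) * Real.exp (-a * (x - t / (2 * a)) ^ 2) := by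
    intro x
    rw [← Real.exp_add]
    congr 1
    field_simp
    ring
  simp_rw [h]
  rw [MeasureTheory.integral_const_mul]
  congr 1
  rw [MeasureTheory.integral_sub_right_eq_self (fun x : ℝ => Real.exp (-a * x ^ 2)) (t / (2 * a)),
    integral_gaussian]

lemma integrable_exp_neg_sq_add_linear {a : ℝ} (ha : 0 < a) (t : ℝ) :
    MeasureTheory.Integrable (fun x : ℝ => Real.exp (-a * x ^ 2 + t * x)) := by
  have h : ∀ x : ℝ, Real.exp (-a * x ^ 2 + t * x) =
      Real.exp (t ^ 2 / (4 * a)) * Real.exp (-a * (x - t / (2 * a)) ^ 2) := by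
    intro x
    rw [← Real.exp_add]
    congr 1
    field_simp
    ring
  simp_rw [h]
  exact ((integrable_exp_neg_mul_sq ha).comp_sub_right (t / (2 * a))).const_mul _

theorem mgf_binomial_fourier_bound (n : ℕ) (hodd : Odd n) (hn : 0 < n) (t : ℝ) :
    (∫ ξ in (-Real.pi)..Real.pi, Real.cos (ξ/2)^n * Real.exp (t * ξ))
      ≤ Real.exp (2 * t^2 / n) * Real.sqrt (8 * Real.pi / n) := by
  have hn' : (0 : ℝ) < n := by exact_mod_cast hn
  set a : ℝ := n / 8 with ha_def
  have ha : 0 < a := by positivity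
  have hle : -Real.pi ≤ Real.pi := by linarith [Real.pi_pos]
  -- pointwise bound on [-π, π]
  have hpt : ∀ ξ ∈ Set.Icc (-Real.pi) Real.pi,
      Real.cos (ξ/2)^n * Real.exp (t * ξ) ≤ Real.exp (-a * ξ ^ 2 + t * ξ) := by
    intro ξ hξ
    obtain ⟨h1, h2⟩ := hξ
    have habs : |ξ/2| ≤ Real.pi / 2 := by
      rw [abs_le]; constructor <;> linarith
    have hcos := cos_le_exp_neg_sq_div_two habs
    have hcosnn : 0 ≤ Real.cos (ξ/2) :=
      Real.cos_nonneg_of_mem_Icc ⟨by linarith, by linarith⟩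
    have hpow : Real.cos (ξ/2)^n ≤ Real.exp (-((ξ/2) ^ 2 / 2)) ^ n :=
      pow_le_pow_left₀ hcosnn hcos n
    have heq : Real.exp (-((ξ/2) ^ 2 / 2)) ^ n = Real.exp (-a * ξ ^ 2) := by
      rw [← Real.exp_nat_mul]
      congr 1
      rw [ha_def]
      ring
    rw [heq] at hpow
    calc Real.cos (ξ/2)^n * Real.exp (t * ξ)
        ≤ Real.exp (-a * ξ ^ 2) * Real.exp (t * ξ) :=
          mul_le_mul_of_nonneg_right hpow (Real.exp_nonneg _)
      _ = Real.exp (-a * ξ ^ 2 + t * ξ) := (Real.exp_add _ _).symm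
  have hint : MeasureTheory.Integrable (fun x : ℝ => Real.exp (-a * x ^ 2 + t * x)) :=
    integrable_exp_neg_sq_add_linear ha t
  have step1 : (∫ ξ in (-Real.pi)..Real.pi, Real.cos (ξ/2)^n * Real.exp (t * ξ))
      ≤ ∫ ξ in (-Real.pi)..Real.pi, Real.exp (-a * ξ ^ 2 + t * ξ) := by
    apply intervalIntegral.integral_mono_on hle _ _ hpt
    · apply Continuous.intervalIntegrable
      continuity
    · apply Continuous.intervalIntegrable
      continuity
  have step2 : (∫ ξ in (-Real.pi)..Real.pi, Real.exp (-a * ξ ^ 2 + t * ξ))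
      ≤ ∫ ξ : ℝ, Real.exp (-a * ξ ^ 2 + t * ξ) := by
    rw [intervalIntegral.integral_of_le hle]
    exact MeasureTheory.setIntegral_le_integral hint
      (Filter.Eventually.of_forall fun x => (Real.exp_pos _).le)
  have step3 : (∫ ξ : ℝ, Real.exp (-a * ξ ^ 2 + t * ξ))
      = Real.exp (2 * t^2 / n) * Real.sqrt (8 * Real.pi / n) := by
    rw [integral_exp_neg_sq_add_linear ha t]
    congr 2
    · rw [ha_def]; field_simp; ring
    · rw [ha_def]; field_simp
  linarith [step1, step2, step3.le, step3.ge]
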